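/- Let (X,φ) be a topological dynamical system and (Y,ψ,π) a factor where ψ is an isometry of the compact metric space Y. If for every ε > 0 there exists K ∈ ℕ such that π(x) = π(y) implies (1/K) Σ_{i=0}^{K} d_X(φ^i(x), φ^i(y)) < ε, then (X,φ) is mean equicontinuous. -/
import Mathlib


open Filter Finset

/-- If `(Y, ψ, π)` is a factor of `(X, φ)` with `ψ` an isometry, and for every
`ε > 0` there is `K ∈ ℕ` such that `π(x) = π(y)` implies
`(1/K) Σ_{i=0}^{K} d(φ^i x, φ^i y) < ε`, then `(X, φ)` is mean
equicontinuous. -/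
theorem stmt_9 {X Y : Type*} [MetricSpace X] [CompactSpace X]
    [MetricSpace Y] [CompactSpace Y]
    (φ : X ≃ₜ X) (ψ : Y ≃ₜ Y) (hiso : ∀ a b : Y, dist (ψ a) (ψ b) = dist a b)
    (π : C(X, Y)) (hsurj : Function.Surjective π)
    (hfac : ∀ x, π (φ x) = ψ (π x))
    (h : ∀ ε > (0 : ℝ), ∃ K : ℕ, 0 < K ∧ ∀ x y : X, π x = π y →
      (∑ i ∈ Finset.range (K + 1), dist ((⇑φ)^[i] x) ((⇑φ)^[i] y)) / K < ε) :
    ∀ ε > (0 : ℝ), ∃ δ > (0 : ℝ), ∀ x y : X, dist x y < δ →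
      Filter.atTop.limsup (fun n : ℕ =>
        (∑ i ∈ Finset.range n, dist ((⇑φ)^[i] x) ((⇑φ)^[i] y)) / n) < ε := by
  intro ε hε
  obtain ⟨K, hK0, hK⟩ := h (ε / 2) (by linarith)
  have hKR : (0 : ℝ) < K := by exact_mod_cast hK0
  -- the Birkhoff block average as a continuous function on `X × X`
  set F : X × X → ℝ := fun p =>
    (∑ i ∈ Finset.range (K + 1), dist ((⇑φ)^[i] p.1) ((⇑φ)^[i] p.2)) / K with hFdef
  have hFcont : Continuous F := by
    apply Continuous.div_const
    apply continuous_finset_sum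
    intro i _
    exact ((φ.continuous.iterate i).comp continuous_fst).dist
      ((φ.continuous.iterate i).comp continuous_snd)
  -- step 1: points with close images under `π` have small block average
  have key : ∃ δ' > (0 : ℝ), ∀ x y : X, dist (π x) (π y) < δ' → F (x, y) < ε / 2 := by
    by_cases hS : {p : X × X | ε / 2 ≤ F p}.Nonempty
    · have hSc : IsCompact {p : X × X | ε / 2 ≤ F p} :=
        (isClosed_le continuous_const hFcont).isCompact
      have hgcont : Continuous fun p : X × X => dist (π p.1) (π p.2) :=
        (π.continuous.comp continuous_fst).dist (π.continuous.comp continuous_snd)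
      obtain ⟨p₀, hp₀, hmin⟩ := hSc.exists_isMinOn hS hgcont.continuousOn
      refine ⟨dist (π p₀.1) (π p₀.2), ?_, ?_⟩
      · rcases lt_or_eq_of_le (dist_nonneg (x := π p₀.1) (y := π p₀.2)) with h0 | h0
        · exact h0
        · exfalso
          have : π p₀.1 = π p₀.2 := by
            rw [← dist_eq_zero]; exact h0.symm
          have := hK p₀.1 p₀.2 this
          have h2 : ε / 2 ≤ F p₀ := hp₀
          rw [hFdef] at h2
          exact absurd this (not_lt.mpr h2)
      · intro x y hxy
        by_contra hcon
        have hmem : (x, y) ∈ {p : X × X | ε / 2 ≤ F p} := not_lt.mp hcon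
        have := hmin hmem
        simp only [Set.mem_setOf_eq] at this
        exact absurd hxy (not_lt.mpr this)
    · refine ⟨1, one_pos, fun x y _ => ?_⟩
      by_contra hcon
      exact hS ⟨(x, y), not_lt.mp hcon⟩
  obtain ⟨δ', hδ'0, hδ'⟩ := key
  -- step 2: uniform continuity of `π`
  have hπu : UniformContinuous π := CompactSpace.uniformContinuous_of_continuous π.continuous
  obtain ⟨δ, hδ0, hδ⟩ := Metric.uniformContinuous_iff.mp hπu δ' hδ'0
  refine ⟨δ, hδ0, fun x y hxy => ?_⟩
  -- step 3: the orbit stays in close fibers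
  have horb : ∀ n : ℕ, dist (π ((⇑φ)^[n] x)) (π ((⇑φ)^[n] y)) = dist (π x) (π y) := by
    intro n
    induction n with
    | zero => simp
    | succ n ih =>
      rw [Function.iterate_succ_apply', Function.iterate_succ_apply', hfac, hfac, hiso]
      exact ih
  have hblock : ∀ j : ℕ, F ((⇑φ)^[j] x, (⇑φ)^[j] y) < ε / 2 := fun j =>
    hδ' _ _ (by rw [horb]; exact hδ hxy)
  set d : ℕ → ℝ := fun i => dist ((⇑φ)^[i] x) ((⇑φ)^[i] y) with hddef
  have hd0 : ∀ i, 0 ≤ d i := fun i => dist_nonneg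
  -- block sums are small
  have hblocksum : ∀ j : ℕ,
      (∑ i ∈ Finset.range (K + 1), d (j + i)) ≤ ε / 2 * K := by
    intro j
    have := hblock j
    rw [hFdef] at this
    have h2 : (∑ i ∈ Finset.range (K + 1),
        dist ((⇑φ)^[i] ((⇑φ)^[j] x)) ((⇑φ)^[i] ((⇑φ)^[j] y))) < ε / 2 * K :=
      (div_lt_iff₀ hKR).mp this
    calc (∑ i ∈ Finset.range (K + 1), d (j + i))
        = ∑ i ∈ Finset.range (K + 1),
            dist ((⇑φ)^[i] ((⇑φ)^[j] x)) ((⇑φ)^[i] ((⇑φ)^[j] y)) := by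
          refine Finset.sum_congr rfl fun i _ => ?_
          rw [hddef]
          simp [add_comm j i, Function.iterate_add_apply]
      _ ≤ ε / 2 * K := le_of_lt h2
  -- sums over multiples of `K + 1`
  have hsum : ∀ m : ℕ, (∑ i ∈ Finset.range (m * (K + 1)), d i) ≤ m * (ε / 2 * K) := by
    intro m
    induction m with
    | zero => simp
    | succ m ih =>
      have : (m + 1) * (K + 1) = m * (K + 1) + (K + 1) := by ring
      rw [this, Finset.sum_range_add]
      push_cast
      have := hblocksum (m * (K + 1))
      calc (∑ i ∈ Finset.range (m * (K + 1)), d i)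
            + ∑ i ∈ Finset.range (K + 1), d (m * (K + 1) + i)
          ≤ m * (ε / 2 * K) + ε / 2 * K := add_le_add ih this
        _ = (m + 1) * (ε / 2 * K) := by ring
  -- eventual bound on the averages
  set c : ℝ := ε * K / (K + 1) with hcdef
  have hcε : c < ε := by
    rw [hcdef, div_lt_iff₀ (by positivity)]
    nlinarith
  have hev : ∀ᶠ n : ℕ in atTop,
      (∑ i ∈ Finset.range n, d i) / n ≤ c := by
    filter_upwards [eventually_ge_atTop (K + 1)] with n hn
    set m : ℕ := n / (K + 1) with hmdef
    have hm1 : 1 ≤ m := by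
      rw [hmdef]
      exact Nat.one_le_div_iff (Nat.succ_pos K) |>.mpr hn
    have hmn : m * (K + 1) ≤ n := Nat.div_mul_le_self n (K + 1)
    have hnm : n < (m + 1) * (K + 1) := by
      rw [hmdef, mul_comm]
      exact Nat.lt_mul_div_succ n (Nat.succ_pos K)
    have hn0 : (0 : ℝ) < n := by
      have : 0 < n := lt_of_lt_of_le (Nat.succ_pos K) hn
      exact_mod_cast this
    rw [div_le_iff₀ hn0]
    have hsub : (∑ i ∈ Finset.range n, d i) ≤ ∑ i ∈ Finset.range ((m + 1) * (K + 1)), d i := by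
      apply Finset.sum_le_sum_of_subset_of_nonneg
      · exact Finset.range_subset_range.mpr (le_of_lt hnm)
      · intro i _ _; exact hd0 i
    have h1 : (∑ i ∈ Finset.range n, d i) ≤ (m + 1 : ℝ) * (ε / 2 * K) := by
      refine le_trans hsub ?_
      have := hsum (m + 1)
      push_cast at this ⊢
      linarith
    refine le_trans h1 ?_
    -- (m+1) * (ε/2 * K) ≤ ε K/(K+1) * n  ⟺  (m+1)(K+1) ≤ 2 n
    have hkey : ((m : ℝ) + 1) * (K + 1) ≤ 2 * n := by
      have h2 : (m + 1) * (K + 1) ≤ 2 * n := by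
        calc (m + 1) * (K + 1) ≤ (m + m) * (K + 1) := by
              apply Nat.mul_le_mul_right
              omega
          _ = 2 * (m * (K + 1)) := by ring
          _ ≤ 2 * n := by omega
      exact_mod_cast h2
    rw [hcdef]
    have hp : (0 : ℝ) < (K : ℝ) + 1 := by positivity
    have hrw : ε * ↑K / (↑K + 1) * ↑n = ε * ↑K * ↑n / (↑K + 1) := by ring
    rw [hrw, le_div_iff₀ hp]
    have hnn : (0 : ℝ) ≤ ε * ↑K / 2 := by positivity
    nlinarith [mul_le_mul_of_nonneg_left hkey hnn]
  -- conclude via limsup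
  have hcb : atTop.IsCoboundedUnder (· ≤ ·) fun n : ℕ =>
      (∑ i ∈ Finset.range n, d i) / n := by
    exact isCoboundedUnder_le_of_le atTop (x := (0 : ℝ)) fun n => by positivity
  exact lt_of_le_of_lt (limsup_le_of_le hcb hev) hcε
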